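/- For permutations u of {1,…,k} and v of {1,…,m}, the number of standard Rothe tableaux of the direct sum satisfies |SRT(u ⊕ v)| = C(ℓ(u)+ℓ(v), ℓ(u)) · |SRT(u)| · |SRT(v)|, where C denotes the binomial coefficient. -/

import Mathlib

/-- The Rothe diagram of a permutation of `{0, …, n-1}` (0-based indexing):
cell `(i,j)` belongs to the diagram iff `j < w i` and `i < w⁻¹ j`. -/
def rothe {n : ℕ} (w : Equiv.Perm (Fin n)) : Finset (Fin n × Fin n) :=
  Finset.univ.filter fun c => c.2 < w c.1 ∧ c.1 < w⁻¹ c.2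

/-- `ℓ(w)`: the number of inversions of `w`. -/
def plen {n : ℕ} (w : Equiv.Perm (Fin n)) : ℕ :=
  (Finset.univ.filter fun p : Fin n × Fin n => p.1 < p.2 ∧ w p.2 < w p.1).card

/-- A standard Rothe tableau of `w`: a labelling of the cells of the Rothe diagram by
`1, …, ℓ(w)` (bijectively), strictly increasing along rows and columns; the labelling
is recorded as a function on all of `Fin n × Fin n` that vanishes off the diagram. -/
def IsSRT {n : ℕ} (w : Equiv.Perm (Fin n)) (T : Fin n × Fin n → ℕ) : Prop :=
  Set.BijOn T ↑(rothe w) (Set.Icc 1 (plen w)) ∧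
  (∀ c, c ∉ rothe w → T c = 0) ∧
  (∀ c ∈ rothe w, ∀ c' ∈ rothe w, c.1 = c'.1 → c.2 < c'.2 → T c < T c') ∧
  (∀ c ∈ rothe w, ∀ c' ∈ rothe w, c.2 = c'.2 → c.1 < c'.1 → T c < T c')

noncomputable def srtCard {n : ℕ} (w : Equiv.Perm (Fin n)) : ℕ :=
  Nat.card {T : Fin n × Fin n → ℕ // IsSRT w T}

/-- The hook of a cell of the Rothe diagram. -/
def hook {n : ℕ} (w : Equiv.Perm (Fin n)) (c : Fin n × Fin n) : Finset (Fin n × Fin n) :=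
  (rothe w).filter fun d => (d.1 = c.1 ∧ c.2 ≤ d.2) ∨ (d.2 = c.2 ∧ c.1 ≤ d.1)

/-- A balanced Rothe tableau of `w`. -/
def IsBRT {n : ℕ} (w : Equiv.Perm (Fin n)) (T : Fin n × Fin n → ℕ) : Prop :=
  Set.BijOn T ↑(rothe w) (Set.Icc 1 (plen w)) ∧
  (∀ c, c ∉ rothe w → T c = 0) ∧
  ∀ c ∈ rothe w,
    ((hook w c).filter fun d => T d < T c).card
      = ((rothe w).filter fun d => d.1 = c.1 ∧ c.2 < d.2).card

noncomputable def brtCard {n : ℕ} (w : Equiv.Perm (Fin n)) : ℕ :=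
  Nat.card {T : Fin n × Fin n → ℕ // IsBRT w T}

/-- `w` contains the pattern `p`. -/
def ContainsPattern {n k : ℕ} (w : Equiv.Perm (Fin n)) (p : Equiv.Perm (Fin k)) : Prop :=
  ∃ f : Fin k → Fin n, StrictMono f ∧ ∀ s t : Fin k, w (f s) < w (f t) ↔ p s < p t

/-- The pattern 2413 (0-based one-line notation `1 3 0 2`). -/
def p2413 : Equiv.Perm (Fin 4) :=
  ⟨![1,3,0,2], ![2,0,3,1], by intro x; fin_cases x <;> rfl, by intro x; fin_cases x <;> rfl⟩

def p2431 : Equiv.Perm (Fin 4) :=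
  ⟨![1,3,2,0], ![3,0,2,1], by intro x; fin_cases x <;> rfl, by intro x; fin_cases x <;> rfl⟩

def p3142 : Equiv.Perm (Fin 4) :=
  ⟨![2,0,3,1], ![1,3,0,2], by intro x; fin_cases x <;> rfl, by intro x; fin_cases x <;> rfl⟩

def p4132 : Equiv.Perm (Fin 4) :=
  ⟨![3,0,2,1], ![1,3,2,0], by intro x; fin_cases x <;> rfl, by intro x; fin_cases x <;> rfl⟩

def p4213 : Equiv.Perm (Fin 4) :=
  ⟨![3,1,0,2], ![2,1,3,0], by intro x; fin_cases x <;> rfl, by intro x; fin_cases x <;> rfl⟩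

def p3241 : Equiv.Perm (Fin 4) :=
  ⟨![2,1,3,0], ![3,1,0,2], by intro x; fin_cases x <;> rfl, by intro x; fin_cases x <;> rfl⟩

def p132 : Equiv.Perm (Fin 3) :=
  ⟨![0,2,1], ![0,2,1], by intro x; fin_cases x <;> rfl, by intro x; fin_cases x <;> rfl⟩

/-- The adjacent transposition `s_a` (0-based: swaps `a` and `a+1`), as a permutation
of `Fin n`; it is the identity when `a+1 ≥ n`. -/
def adjT (n a : ℕ) : Equiv.Perm (Fin n) :=
  if h : a + 1 < n then Equiv.swap ⟨a, Nat.lt_of_succ_lt h⟩ ⟨a + 1, h⟩ else 1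

/-- Reduced words of `w`, written with 0-based letters `a` (`0 ≤ a ≤ n-2`). -/
def IsReducedWord {n : ℕ} (w : Equiv.Perm (Fin n)) (L : List ℕ) : Prop :=
  (∀ a ∈ L, a + 1 < n) ∧ (L.map (adjT n)).prod = w ∧ L.length = plen w

noncomputable def rwCard {n : ℕ} (w : Equiv.Perm (Fin n)) : ℕ :=
  Nat.card {L : List ℕ // IsReducedWord w L}

/-- Direct sum of two permutations. -/
def dsum {k m : ℕ} (u : Equiv.Perm (Fin k)) (v : Equiv.Perm (Fin m)) :
    Equiv.Perm (Fin (k + m)) :=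
  finSumFinEquiv.permCongr (Equiv.sumCongr u v)

def dsumSig (p q : Σ m : ℕ, Equiv.Perm (Fin m)) : Σ m : ℕ, Equiv.Perm (Fin m) :=
  ⟨p.1 + q.1, dsum p.2 q.2⟩

/-- The direct sum `w¹ ⊕ w² ⊕ ⋯ ⊕ wᵏ` of a list of permutations. -/
def dsumList (l : List (Σ m : ℕ, Equiv.Perm (Fin m))) : Σ m : ℕ, Equiv.Perm (Fin m) :=
  l.foldr dsumSig ⟨0, 1⟩

/-- `w` is decomposable if it maps `{0,…,k-1}` onto itself for some `0 < k < n`. -/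
def Decomposable {n : ℕ} (w : Equiv.Perm (Fin n)) : Prop :=
  ∃ k : ℕ, 0 < k ∧ k < n ∧ ∀ i : Fin n, (i : ℕ) < k → ((w i : ℕ)) < k

/-- The Lehmer code of `w`. -/
def lehmer {n : ℕ} (w : Equiv.Perm (Fin n)) (i : Fin n) : ℕ :=
  (Finset.univ.filter fun j : Fin n => i < j ∧ w j < w i).card

/-- The cells of the Young diagram of `lam`. -/
def yCells {m : ℕ} (lam : Fin m → ℕ) : Set (Fin m × ℕ) :=
  {c | c.2 < lam c.1}

/-- A standard Young tableau of shape `lam`. -/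
def IsSYT {m : ℕ} (lam : Fin m → ℕ) (T : Fin m × ℕ → ℕ) : Prop :=
  Set.BijOn T (yCells lam) (Set.Icc 1 (∑ i, lam i)) ∧
  (∀ c, c ∉ yCells lam → T c = 0) ∧
  (∀ c ∈ yCells lam, ∀ c' ∈ yCells lam, c.1 = c'.1 → c.2 < c'.2 → T c < T c') ∧
  (∀ c ∈ yCells lam, ∀ c' ∈ yCells lam, c.2 = c'.2 → c.1 < c'.1 → T c < T c')

/-- `f^λ`: the number of standard Young tableaux of shape `lam`. -/
noncomputable def sytCard {m : ℕ} (lam : Fin m → ℕ) : ℕ :=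
  Nat.card {T : Fin m × ℕ → ℕ // IsSYT lam T}

namespace SRTaux



def lrank (l : List ℕ) (x : ℕ) : ℕ := l.idxOf x + 1
def lsel (l : List ℕ) (t : ℕ) : ℕ := if t = 0 then 0 else l.getD (t-1) 0

variable {l : List ℕ} {x y : ℕ} {t : ℕ}

lemma lrank_pos : 1 ≤ lrank l x := Nat.le_add_left 1 _

lemma lrank_le (hx : x ∈ l) : lrank l x ≤ l.length :=
  Nat.succ_le_of_lt (List.idxOf_lt_length_iff.2 hx)

lemma lsel_zero : lsel l 0 = 0 := rfl

lemma lsel_eq_get (h1 : 1 ≤ t) (h2 : t ≤ l.length) :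
    lsel l t = l.get ⟨t - 1, by omega⟩ := by
  have : t ≠ 0 := by omega
  rw [lsel, if_neg this, List.getD_eq_getElem _ _ (show t - 1 < l.length by omega)]
  simp

lemma lsel_mem (h1 : 1 ≤ t) (h2 : t ≤ l.length) : lsel l t ∈ l := by
  rw [lsel_eq_get h1 h2]; exact List.get_mem _ _

lemma lsel_lrank (hx : x ∈ l) : lsel l (lrank l x) = x := by
  have h := List.idxOf_lt_length_iff.2 hx
  rw [lsel_eq_get lrank_pos (lrank_le hx)]
  simpa [lrank] using List.idxOf_get h

lemma lrank_lsel (hn : l.Nodup) (h1 : 1 ≤ t) (h2 : t ≤ l.length) :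
    lrank l (lsel l t) = t := by
  rw [lsel_eq_get h1 h2, lrank, List.get_idxOf hn]
  simp; omega

lemma lrank_lt_lrank (hl : l.Pairwise (·<·)) (hx : x ∈ l) (hy : y ∈ l) (hxy : x < y) :
    lrank l x < lrank l y := by
  have hx' := List.idxOf_lt_length_iff.2 hx
  have hy' := List.idxOf_lt_length_iff.2 hy
  have hs := hl.sortedLT.strictMono_get
  by_contra h
  have hle : l.idxOf y ≤ l.idxOf x := by simp [lrank] at h; omega
  have : l.get ⟨l.idxOf y, hy'⟩ ≤ l.get ⟨l.idxOf x, hx'⟩ :=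
    hs.monotone (by exact hle)
  rw [List.idxOf_get hx', List.idxOf_get hy'] at this
  omega

lemma lsel_lt_lsel (hl : l.Pairwise (·<·)) (h1 : 1 ≤ t) (h2 : t ≤ l.length)
    {t' : ℕ} (h1' : 1 ≤ t') (h2' : t' ≤ l.length) (h : t < t') :
    lsel l t < lsel l t' := by
  rw [lsel_eq_get h1 h2, lsel_eq_get h1' h2']
  exact hl.sortedLT.strictMono_get (by simp [Fin.lt_def]; omega)

/-! ### packages for finsets -/

/-- The sorted list of a finset of naturals. -/
def slist (S : Finset ℕ) : List ℕ := S.sort (·≤·)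

lemma slist_sorted (S : Finset ℕ) : (slist S).Pairwise (·<·) := S.sortedLT_sort.pairwise
lemma slist_nodup (S : Finset ℕ) : (slist S).Nodup := S.sort_nodup (·≤·)
lemma mem_slist {S : Finset ℕ} : x ∈ slist S ↔ x ∈ S := Finset.mem_sort _
lemma slist_length (S : Finset ℕ) : (slist S).length = S.card := Finset.length_sort _

variable {γ : Type*} [DecidableEq γ] {A : Finset γ} {g tt : γ → ℕ} {S : Finset ℕ}

section Rank
variable (hinj : Set.InjOn g ↑A) (himg : A.image g = S)
include himg

lemma g_mem_S {c : γ} (hc : c ∈ A) : g c ∈ S := himg ▸ Finset.mem_image_of_mem g hc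

include hinj in
lemma rank_bijOn :
    Set.BijOn (fun c => lrank (slist S) (g c)) ↑A (Set.Icc 1 S.card) := by
  refine ⟨fun c hc => ?_, fun c hc c' hc' h => ?_, fun t ht => ?_⟩
  · exact ⟨lrank_pos, (slist_length S) ▸ lrank_le (mem_slist.2 (g_mem_S himg hc))⟩
  · apply hinj hc hc'
    have := congrArg (lsel (slist S)) h
    rwa [lsel_lrank (mem_slist.2 (g_mem_S himg hc)),
      lsel_lrank (mem_slist.2 (g_mem_S himg hc'))] at this
  · obtain ⟨h1, h2⟩ := ht
    have hx : lsel (slist S) t ∈ S :=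
      mem_slist.1 (lsel_mem h1 ((slist_length S) ▸ h2))
    rw [← himg, Finset.mem_image] at hx
    obtain ⟨c, hc, hgc⟩ := hx
    refine ⟨c, hc, ?_⟩
    show lrank (slist S) (g c) = t
    rw [himg] at hgc
    rw [hgc, lrank_lsel (slist_nodup S) h1 ((slist_length S) ▸ h2)]

lemma rank_mono {c c' : γ} (hc : c ∈ A) (hc' : c' ∈ A) (h : g c < g c') :
    lrank (slist S) (g c) < lrank (slist S) (g c') :=
  lrank_lt_lrank (slist_sorted S) (mem_slist.2 (g_mem_S himg hc))
    (mem_slist.2 (g_mem_S himg hc')) h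

lemma rank_recover {c : γ} (hc : c ∈ A) :
    lsel (slist S) (lrank (slist S) (g c)) = g c :=
  lsel_lrank (mem_slist.2 (g_mem_S himg hc))

end Rank

section Sel
variable (hbij : Set.BijOn tt ↑A (Set.Icc 1 S.card))
include hbij

lemma sel_mem_Icc {c : γ} (hc : c ∈ A) : 1 ≤ tt c ∧ tt c ≤ (slist S).length := by
  have := hbij.mapsTo hc
  rw [Set.mem_Icc] at this
  exact ⟨this.1, (slist_length S) ▸ this.2⟩

lemma sel_bijOn : Set.BijOn (fun c => lsel (slist S) (tt c)) ↑A ↑S := by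
  refine ⟨fun c hc => ?_, fun c hc c' hc' h => ?_, fun x hx => ?_⟩
  · obtain ⟨h1, h2⟩ := sel_mem_Icc hbij hc
    exact mem_slist.1 (lsel_mem h1 h2)
  · obtain ⟨h1, h2⟩ := sel_mem_Icc hbij hc
    obtain ⟨h1', h2'⟩ := sel_mem_Icc hbij hc'
    apply hbij.injOn hc hc'
    have := congrArg (lrank (slist S)) h
    rwa [lrank_lsel (slist_nodup S) h1 h2, lrank_lsel (slist_nodup S) h1' h2'] at this
  · have hxS : (x : ℕ) ∈ S := hx
    have hrank : lrank (slist S) x ∈ Set.Icc 1 S.card :=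
      ⟨lrank_pos, (slist_length S) ▸ lrank_le (mem_slist.2 hxS)⟩
    obtain ⟨c, hc, hct⟩ := hbij.surjOn hrank
    refine ⟨c, hc, ?_⟩
    show lsel (slist S) (tt c) = x
    rw [hct]
    exact lsel_lrank (mem_slist.2 hxS)

lemma sel_mono {c c' : γ} (hc : c ∈ A) (hc' : c' ∈ A) (h : tt c < tt c') :
    lsel (slist S) (tt c) < lsel (slist S) (tt c') := by
  obtain ⟨h1, h2⟩ := sel_mem_Icc hbij hc
  obtain ⟨h1', h2'⟩ := sel_mem_Icc hbij hc'
  exact lsel_lt_lsel (slist_sorted S) h1 h2 h1' h2' h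

lemma sel_recover {c : γ} (hc : c ∈ A) :
    lrank (slist S) (lsel (slist S) (tt c)) = tt c := by
  obtain ⟨h1, h2⟩ := sel_mem_Icc hbij hc
  exact lrank_lsel (slist_nodup S) h1 h2

lemma sel_image : A.image (fun c => lsel (slist S) (tt c)) = S := by
  apply Finset.coe_injective
  rw [Finset.coe_image]
  exact (sel_bijOn hbij).image_eq

end Sel



section Dsum
open Fin
variable {k m : ℕ} (u : Equiv.Perm (Fin k)) (v : Equiv.Perm (Fin m))

lemma dsum_castAdd (i : Fin k) : dsum u v (Fin.castAdd m i) = Fin.castAdd m (u i) := by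
  simp [dsum, Equiv.permCongr_apply]

lemma dsum_natAdd (i : Fin m) : dsum u v (Fin.natAdd k i) = Fin.natAdd k (v i) := by
  simp [dsum, Equiv.permCongr_apply]

lemma dsum_inv : (dsum u v)⁻¹ = dsum u⁻¹ v⁻¹ := by
  rw [inv_eq_iff_mul_eq_one]
  ext x
  induction x using Fin.addCases with
  | left i => simp [Equiv.Perm.mul_apply, dsum_castAdd]
  | right i => simp [Equiv.Perm.mul_apply, dsum_natAdd]

lemma memL (i j : Fin k) :
    (Fin.castAdd m i, Fin.castAdd m j) ∈ rothe (dsum u v) ↔ (i, j) ∈ rothe u := by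
  simp only [rothe, Finset.mem_filter, Finset.mem_univ, true_and, dsum_inv,
    dsum_castAdd, Fin.lt_def, Fin.coe_castAdd]

lemma memR (i j : Fin m) :
    (Fin.natAdd k i, Fin.natAdd k j) ∈ rothe (dsum u v) ↔ (i, j) ∈ rothe v := by
  simp only [rothe, Finset.mem_filter, Finset.mem_univ, true_and, dsum_inv,
    dsum_natAdd, Fin.lt_def, Fin.coe_natAdd]
  omega

lemma dsum_val_lt {i : Fin (k+m)} (h : (i : ℕ) < k) : (dsum u v i : ℕ) < k := by
  have : i = Fin.castAdd m ⟨i.1, h⟩ := by ext; rfl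
  rw [this, dsum_castAdd]
  exact (u ⟨i.1, h⟩).2

lemma dsum_val_ge {i : Fin (k+m)} (h : k ≤ (i : ℕ)) : k ≤ (dsum u v i : ℕ) := by
  have : i = Fin.natAdd k ⟨i.1 - k, by omega⟩ := by ext; simp; omega
  rw [this, dsum_natAdd]
  simp

lemma not_mem_mixed {c : Fin (k+m) × Fin (k+m)}
    (h : ((c.1 : ℕ) < k ∧ k ≤ (c.2 : ℕ)) ∨ ((c.2 : ℕ) < k ∧ k ≤ (c.1 : ℕ))) :
    c ∉ rothe (dsum u v) := by
  intro hc
  simp only [rothe, Finset.mem_filter, Finset.mem_univ, true_and, Fin.lt_def] at hc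
  rcases h with ⟨h1, h2⟩ | ⟨h1, h2⟩
  · have := dsum_val_lt u v h1
    omega
  · rw [dsum_inv] at hc
    have := dsum_val_lt u⁻¹ v⁻¹ h1
    omega

lemma rothe_cases {c : Fin (k+m) × Fin (k+m)} (hc : c ∈ rothe (dsum u v)) :
    (∃ i j, c = (Fin.castAdd m i, Fin.castAdd m j) ∧ (i, j) ∈ rothe u) ∨
    (∃ i j, c = (Fin.natAdd k i, Fin.natAdd k j) ∧ (i, j) ∈ rothe v) := by
  by_cases h1 : (c.1 : ℕ) < k
  · by_cases h2 : (c.2 : ℕ) < k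
    · left
      refine ⟨⟨c.1.1, h1⟩, ⟨c.2.1, h2⟩, ?_, ?_⟩
      · ext <;> rfl
      · rw [← memL]
        convert hc using 2 <;> ext <;> rfl
    · exact absurd hc (not_mem_mixed u v (Or.inl ⟨h1, by omega⟩))
  · by_cases h2 : (c.2 : ℕ) < k
    · exact absurd hc (not_mem_mixed u v (Or.inr ⟨h2, by omega⟩))
    · right
      refine ⟨⟨c.1.1 - k, by omega⟩, ⟨c.2.1 - k, by omega⟩, ?_, ?_⟩
      · have e1 : c.1 = Fin.natAdd k ⟨c.1.1 - k, by omega⟩ := by ext; simp; omega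
        have e2 : c.2 = Fin.natAdd k ⟨c.2.1 - k, by omega⟩ := by ext; simp; omega
        rw [← e1, ← e2]
      · rw [← memR]
        have e1 : c.1 = Fin.natAdd k ⟨c.1.1 - k, by omega⟩ := by ext; simp; omega
        have e2 : c.2 = Fin.natAdd k ⟨c.2.1 - k, by omega⟩ := by ext; simp; omega
        convert hc using 2 <;> [exact e1.symm; exact e2.symm]

/-- The left block embedding of cells. -/
def eL : Fin k × Fin k ↪ Fin (k+m) × Fin (k+m) :=
  ⟨fun c => (Fin.castAdd m c.1, Fin.castAdd m c.2), by
    intro c c' h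
    simp only [Prod.mk.injEq] at h
    exact Prod.ext (Fin.castAdd_injective _ _ h.1) (Fin.castAdd_injective _ _ h.2)⟩

/-- The right block embedding of cells. -/
def eR : Fin m × Fin m ↪ Fin (k+m) × Fin (k+m) :=
  ⟨fun c => (Fin.natAdd k c.1, Fin.natAdd k c.2), by
    intro c c' h
    simp only [Prod.mk.injEq] at h
    refine Prod.ext ?_ ?_
    · ext; have := congrArg Fin.val h.1; simpa using this
    · ext; have := congrArg Fin.val h.2; simpa using this⟩

lemma rothe_dsum_eq :
    rothe (dsum u v) = ((rothe u).map (eL (k:=k) (m:=m))).disjUnion ((rothe v).map eR)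
      (by
        rw [Finset.disjoint_left]
        rintro c hc hc'
        simp only [Finset.mem_map, eL, eR, Function.Embedding.coeFn_mk] at hc hc'
        obtain ⟨d, _, rfl⟩ := hc
        obtain ⟨d', _, he⟩ := hc'
        have := congrArg (fun p => (p.1 : ℕ)) he
        simp [DFunLike.coe] at this
        omega) := by
  ext c
  rw [Finset.mem_disjUnion]
  constructor
  · intro hc
    rcases rothe_cases u v hc with ⟨i, j, rfl, h⟩ | ⟨i, j, rfl, h⟩
    · exact Or.inl (Finset.mem_map.2 ⟨(i, j), h, rfl⟩)
    · exact Or.inr (Finset.mem_map.2 ⟨(i, j), h, rfl⟩)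
  · rintro (hc | hc) <;>
    · obtain ⟨d, hd, rfl⟩ := Finset.mem_map.1 hc
      first
      | exact (memL u v d.1 d.2).2 hd
      | exact (memR u v d.1 d.2).2 hd

lemma plen_eq_card_rothe {n : ℕ} (w : Equiv.Perm (Fin n)) : plen w = (rothe w).card := by
  unfold plen
  apply Finset.card_bij (fun p _ => (p.1, w p.2))
  · rintro ⟨i, j⟩ hp
    simp only [Finset.mem_filter, Finset.mem_univ, true_and] at hp
    simp only [rothe, Finset.mem_filter, Finset.mem_univ, true_and]
    exact ⟨hp.2, by simpa using hp.1⟩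
  · rintro ⟨i, j⟩ hp ⟨i', j'⟩ hp' h
    simp only [Prod.mk.injEq] at h
    exact Prod.ext h.1 (w.injective h.2)
  · rintro ⟨i, j⟩ hc
    simp only [rothe, Finset.mem_filter, Finset.mem_univ, true_and] at hc
    refine ⟨(i, w⁻¹ j), ?_, ?_⟩
    · simp only [Finset.mem_filter, Finset.mem_univ, true_and]
      exact ⟨hc.2, by simpa using hc.1⟩
    · simp

lemma plen_dsum : plen (dsum u v) = plen u + plen v := by
  rw [plen_eq_card_rothe, plen_eq_card_rothe, plen_eq_card_rothe, rothe_dsum_eq,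
    Finset.card_disjUnion, Finset.card_map, Finset.card_map]

end Dsum

end SRTaux


namespace SRTaux

section Main
open Finset
variable {k m : ℕ} (u : Equiv.Perm (Fin k)) (v : Equiv.Perm (Fin m))

def Sof (T : Fin (k+m) × Fin (k+m) → ℕ) : Finset ℕ :=
  (rothe u).image (fun c => T (eL c))

def Svof (T : Fin (k+m) × Fin (k+m) → ℕ) : Finset ℕ :=
  (rothe v).image (fun c => T (eR c))

def Tuof (T : Fin (k+m) × Fin (k+m) → ℕ) : Fin k × Fin k → ℕ :=
  fun c => if c ∈ rothe u then lrank (slist (Sof u T)) (T (eL c)) else 0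

def Tvof (T : Fin (k+m) × Fin (k+m) → ℕ) : Fin m × Fin m → ℕ :=
  fun c => if c ∈ rothe v then lrank (slist (Svof v T)) (T (eR c)) else 0

def Tof (S Sc : Finset ℕ) (Tu : Fin k × Fin k → ℕ) (Tv : Fin m × Fin m → ℕ) :
    Fin (k+m) × Fin (k+m) → ℕ := fun c =>
  if h1 : (c.1 : ℕ) < k then
    (if h2 : (c.2 : ℕ) < k then lsel (slist S) (Tu (⟨c.1.1, h1⟩, ⟨c.2.1, h2⟩)) else 0)
  else if h2 : k ≤ (c.2 : ℕ) then
    lsel (slist Sc) (Tv (⟨c.1.1 - k, by have := c.1.isLt; omega⟩,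
                         ⟨c.2.1 - k, by have := c.2.isLt; omega⟩))
  else 0

variable {S Sc : Finset ℕ} {Tu : Fin k × Fin k → ℕ} {Tv : Fin m × Fin m → ℕ}
variable {T : Fin (k+m) × Fin (k+m) → ℕ}

lemma Tof_eL (c : Fin k × Fin k) :
    Tof S Sc Tu Tv (eL c) = lsel (slist S) (Tu c) := by
  have h1 : (((eL (m := m) c).1 : Fin (k+m)) : ℕ) < k := c.1.isLt
  have h2 : (((eL (m := m) c).2 : Fin (k+m)) : ℕ) < k := c.2.isLt
  rw [Tof, dif_pos h1, dif_pos h2]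
  exact congrArg (fun p => lsel (slist S) (Tu p)) (Prod.ext (by ext; rfl) (by ext; rfl))

lemma Tof_eR (c : Fin m × Fin m) :
    Tof S Sc Tu Tv (eR c) = lsel (slist Sc) (Tv c) := by
  have h1 : ¬ (((eR (k := k) c).1 : Fin (k+m)) : ℕ) < k := by simp [eR, DFunLike.coe]
  have h2 : k ≤ (((eR (k := k) c).2 : Fin (k+m)) : ℕ) := by simp [eR, DFunLike.coe]
  rw [Tof, dif_neg h1, dif_pos h2]
  congr 1
  exact congrArg Tv (Prod.ext (by ext; simp [eR, DFunLike.coe]) (by ext; simp [eR, DFunLike.coe]))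

lemma mem_rothe_eL {c : Fin k × Fin k} (hc : c ∈ rothe u) :
    eL (m := m) c ∈ rothe (dsum u v) := (memL u v c.1 c.2).2 hc

lemma mem_rothe_eR {c : Fin m × Fin m} (hc : c ∈ rothe v) :
    eR (k := k) c ∈ rothe (dsum u v) := (memR u v c.1 c.2).2 hc

variable (hT : IsSRT (dsum u v) T)

section Forward
include hT

lemma injL : Set.InjOn (fun c => T (eL c)) ↑(rothe u) := by
  intro c hc c' hc' h
  exact eL.injective (hT.1.injOn (mem_rothe_eL u v hc) (mem_rothe_eL u v hc') h)

lemma injR : Set.InjOn (fun c => T (eR c)) ↑(rothe v) := by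
  intro c hc c' hc' h
  exact eR.injective (hT.1.injOn (mem_rothe_eR u v hc) (mem_rothe_eR u v hc') h)

lemma Sof_card : (Sof u T).card = plen u := by
  rw [Sof, Finset.card_image_of_injOn (injL u v hT), ← plen_eq_card_rothe]

lemma Svof_card : (Svof v T).card = plen v := by
  rw [Svof, Finset.card_image_of_injOn (injR u v hT), ← plen_eq_card_rothe]

lemma Sof_mem_pows :
    Sof u T ∈ Finset.powersetCard (plen u) (Finset.Icc 1 (plen u + plen v)) := by
  rw [Finset.mem_powersetCard]
  refine ⟨fun x hx => ?_, Sof_card u v hT⟩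
  rw [Sof, Finset.mem_image] at hx
  obtain ⟨c, hc, rfl⟩ := hx
  have := hT.1.mapsTo (mem_rothe_eL u v hc)
  rw [Set.mem_Icc, plen_dsum] at this
  exact Finset.mem_Icc.2 this

lemma IsSRT_Tuof : IsSRT u (Tuof u T) := by
  refine ⟨?_, ?_, ?_, ?_⟩
  · have := rank_bijOn (S := Sof u T) (injL u v hT) rfl
    rw [Sof_card u v hT] at this
    exact this.congr fun c hc => by
      simp only [Tuof, if_pos (Finset.mem_coe.1 hc)]
  · intro c hc
    simp only [Tuof, if_neg hc]
  · intro c hc c' hc' h1 h2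
    simp only [Tuof, if_pos hc, if_pos hc']
    refine rank_mono rfl hc hc' ?_
    exact hT.2.2.1 _ (mem_rothe_eL u v hc) _ (mem_rothe_eL u v hc')
      (congrArg (Fin.castAdd m) h1) h2
  · intro c hc c' hc' h1 h2
    simp only [Tuof, if_pos hc, if_pos hc']
    refine rank_mono rfl hc hc' ?_
    exact hT.2.2.2 _ (mem_rothe_eL u v hc) _ (mem_rothe_eL u v hc')
      (congrArg (Fin.castAdd m) h1) h2

lemma IsSRT_Tvof : IsSRT v (Tvof v T) := by
  refine ⟨?_, ?_, ?_, ?_⟩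
  · have := rank_bijOn (S := Svof v T) (injR u v hT) rfl
    rw [Svof_card u v hT] at this
    exact this.congr fun c hc => by
      simp only [Tvof, if_pos (Finset.mem_coe.1 hc)]
  · intro c hc
    simp only [Tvof, if_neg hc]
  · intro c hc c' hc' h1 h2
    simp only [Tvof, if_pos hc, if_pos hc']
    refine rank_mono rfl hc hc' ?_
    exact hT.2.2.1 _ (mem_rothe_eR u v hc) _ (mem_rothe_eR u v hc')
      (congrArg (Fin.natAdd k) h1)
      (by rw [Fin.lt_def] at h2 ⊢; exact Nat.add_lt_add_left h2 k)
  · intro c hc c' hc' h1 h2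
    simp only [Tvof, if_pos hc, if_pos hc']
    refine rank_mono rfl hc hc' ?_
    exact hT.2.2.2 _ (mem_rothe_eR u v hc) _ (mem_rothe_eR u v hc')
      (congrArg (Fin.natAdd k) h1)
      (by rw [Fin.lt_def] at h2 ⊢; exact Nat.add_lt_add_left h2 k)

lemma recoverL {c : Fin k × Fin k} (hc : c ∈ rothe u) :
    lsel (slist (Sof u T)) (Tuof u T c) = T (eL c) := by
  simp only [Tuof, if_pos hc]
  exact rank_recover rfl hc

lemma recoverR {c : Fin m × Fin m} (hc : c ∈ rothe v) :
    lsel (slist (Svof v T)) (Tvof v T c) = T (eR c) := by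
  simp only [Tvof, if_pos hc]
  exact rank_recover rfl hc

lemma Svof_eq_compl :
    Svof v T = Finset.Icc 1 (plen u + plen v) \ Sof u T := by
  have himage : (rothe (dsum u v)).image T = Finset.Icc 1 (plen u + plen v) := by
    apply Finset.coe_injective
    rw [Finset.coe_image, hT.1.image_eq, plen_dsum, Finset.coe_Icc]
  have hL : ((rothe u).map (eL (k := k) (m := m))).image T = Sof u T := by
    rw [Finset.map_eq_image, Finset.image_image]; rfl
  have hR : ((rothe v).map (eR (k := k) (m := m))).image T = Svof v T := by
    rw [Finset.map_eq_image, Finset.image_image]; rfl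
  have hsplit : Sof u T ∪ Svof v T = Finset.Icc 1 (plen u + plen v) := by
    rw [← hL, ← hR, ← Finset.image_union, ← Finset.disjUnion_eq_union, ← rothe_dsum_eq, himage]
    rw [Finset.disjoint_left]
    rintro c hc hc'
    obtain ⟨d, _, rfl⟩ := Finset.mem_map.1 hc
    obtain ⟨d', _, he⟩ := Finset.mem_map.1 hc'
    have := congrArg (fun p => (p.1 : ℕ)) he
    simp [eL, eR, DFunLike.coe] at this
    omega
  have hdisj : Disjoint (Sof u T) (Svof v T) := by
    rw [Finset.disjoint_left]
    rintro x hx hx'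
    rw [Sof, Finset.mem_image] at hx
    rw [Svof, Finset.mem_image] at hx'
    obtain ⟨c, hc, rfl⟩ := hx
    obtain ⟨d, hd, he⟩ := hx'
    have := hT.1.injOn (mem_rothe_eR u v hd) (mem_rothe_eL u v hc) he
    have := congrArg (fun p => (p.1 : ℕ)) this
    simp [eL, eR, DFunLike.coe] at this
    omega
  rw [← hsplit, Finset.union_sdiff_cancel_left hdisj]

end Forward

section Backward
variable (hS : S ⊆ Finset.Icc 1 (plen u + plen v)) (hcard : S.card = plen u)
variable (hTu : IsSRT u Tu) (hTv : IsSRT v Tv)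

lemma Sc_card (hS : S ⊆ Finset.Icc 1 (plen u + plen v)) (hcard : S.card = plen u) :
    (Finset.Icc 1 (plen u + plen v) \ S).card = plen v := by
  rw [Finset.card_sdiff_of_subset hS, hcard, Nat.card_Icc]
  omega

lemma hbu (hcard : S.card = plen u) (hTu : IsSRT u Tu) :
    Set.BijOn Tu ↑(rothe u) (Set.Icc 1 S.card) := by
  rw [hcard]; exact hTu.1

lemma hbv (hS : S ⊆ Finset.Icc 1 (plen u + plen v)) (hcard : S.card = plen u)
    (hTv : IsSRT v Tv) :
    Set.BijOn Tv ↑(rothe v) (Set.Icc 1 (Finset.Icc 1 (plen u + plen v) \ S).card) := by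
  rw [Sc_card u v hS hcard]; exact hTv.1

/-- Abbreviation for the backward map with complement filled in. -/
def TofC (S : Finset ℕ) (Tu : Fin k × Fin k → ℕ) (Tv : Fin m × Fin m → ℕ) :
    Fin (k+m) × Fin (k+m) → ℕ :=
  Tof S (Finset.Icc 1 (plen u + plen v) \ S) Tu Tv

lemma TofC_zero (hTu : IsSRT u Tu) (hTv : IsSRT v Tv)
    {c : Fin (k+m) × Fin (k+m)} (hc : c ∉ rothe (dsum u v)) :
    TofC u v S Tu Tv c = 0 := by
  rw [TofC, Tof]
  by_cases h1 : (c.1 : ℕ) < k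
  · rw [dif_pos h1]
    by_cases h2 : (c.2 : ℕ) < k
    · rw [dif_pos h2]
      have hmem : (⟨c.1.1, h1⟩, (⟨c.2.1, h2⟩ : Fin k)) ∉ rothe u := by
        intro hmem
        apply hc
        have := (memL u v ⟨c.1.1, h1⟩ ⟨c.2.1, h2⟩).2 hmem
        have e1 : Fin.castAdd m (⟨c.1.1, h1⟩ : Fin k) = c.1 := by ext; rfl
        have e2 : Fin.castAdd m (⟨c.2.1, h2⟩ : Fin k) = c.2 := by ext; rfl
        rwa [e1, e2] at this
      rw [hTu.2.1 _ hmem, lsel_zero]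
    · rw [dif_neg h2]
  · rw [dif_neg h1]
    by_cases h2 : k ≤ (c.2 : ℕ)
    · rw [dif_pos h2]
      have hmem : ((⟨c.1.1 - k, by have := c.1.isLt; omega⟩ : Fin m),
          (⟨c.2.1 - k, by have := c.2.isLt; omega⟩ : Fin m)) ∉ rothe v := by
        intro hmem
        apply hc
        have := (memR u v _ _).2 hmem
        have e1 : Fin.natAdd k (⟨c.1.1 - k, by have := c.1.isLt; omega⟩ : Fin m) = c.1 := by
          ext; simp; omega
        have e2 : Fin.natAdd k (⟨c.2.1 - k, by have := c.2.isLt; omega⟩ : Fin m) = c.2 := by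
          ext; simp; omega
        rwa [e1, e2] at this
      rw [hTv.2.1 _ hmem, lsel_zero]
    · rw [dif_neg h2]

include hS hcard hTu hTv in
lemma IsSRT_TofC : IsSRT (dsum u v) (TofC u v S Tu Tv) := by
  have selL := sel_bijOn (hbu u hcard hTu)
  have selR := sel_bijOn (hbv u v hS hcard hTv)
  have evL : ∀ i j : Fin k, TofC u v S Tu Tv (Fin.castAdd m i, Fin.castAdd m j)
      = lsel (slist S) (Tu (i, j)) :=
    fun i j => Tof_eL (i, j)
  have evR : ∀ i j : Fin m, TofC u v S Tu Tv (Fin.natAdd k i, Fin.natAdd k j)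
      = lsel (slist (Finset.Icc 1 (plen u + plen v) \ S)) (Tv (i, j)) :=
    fun i j => Tof_eR (i, j)
  refine ⟨?_, fun c hc => TofC_zero u v hTu hTv hc, ?_, ?_⟩
  · rw [plen_dsum]
    refine ⟨fun c hc => ?_, fun c hc c' hc' h => ?_, fun x hx => ?_⟩
    · rcases rothe_cases u v (Finset.mem_coe.1 hc) with ⟨i, j, rfl, h⟩ | ⟨i, j, rfl, h⟩
      · have := selL.mapsTo h
        rw [evL i j]
        have hin : lsel (slist S) (Tu (i, j)) ∈ S := this
        have := hS hin
        rw [Finset.mem_Icc] at this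
        exact Set.mem_Icc.2 this
      · have := selR.mapsTo h
        rw [evR i j]
        have hin : lsel (slist (Finset.Icc 1 (plen u + plen v) \ S)) (Tv (i, j))
            ∈ Finset.Icc 1 (plen u + plen v) \ S := this
        have := Finset.sdiff_subset hin
        rw [Finset.mem_Icc] at this
        exact Set.mem_Icc.2 this
    · rcases rothe_cases u v (Finset.mem_coe.1 hc) with ⟨i, j, rfl, hm⟩ | ⟨i, j, rfl, hm⟩ <;>
      rcases rothe_cases u v (Finset.mem_coe.1 hc') with ⟨i', j', rfl, hm'⟩ | ⟨i', j', rfl, hm'⟩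
      · rw [evL i j, evL i' j'] at h
        have := selL.injOn hm hm' h
        exact congrArg eL this
      · rw [evL i j, evR i' j'] at h
        have h1 : lsel (slist S) (Tu (i, j)) ∈ S := selL.mapsTo hm
        have h2 : lsel (slist (Finset.Icc 1 (plen u + plen v) \ S)) (Tv (i', j'))
            ∈ Finset.Icc 1 (plen u + plen v) \ S := selR.mapsTo hm'
        rw [← h] at h2
        exact absurd h1 (Finset.mem_sdiff.1 h2).2
      · rw [evR i j, evL i' j'] at h
        have h1 : lsel (slist S) (Tu (i', j')) ∈ S := selL.mapsTo hm'
        have h2 : lsel (slist (Finset.Icc 1 (plen u + plen v) \ S)) (Tv (i, j))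
            ∈ Finset.Icc 1 (plen u + plen v) \ S := selR.mapsTo hm
        rw [h] at h2
        exact absurd h1 (Finset.mem_sdiff.1 h2).2
      · rw [evR i j, evR i' j'] at h
        have := selR.injOn hm hm' h
        exact congrArg eR this
    · rw [Set.mem_Icc] at hx
      by_cases hxs : x ∈ S
      · obtain ⟨c, hc, hcx⟩ := selL.surjOn (Finset.mem_coe.2 hxs)
        exact ⟨eL c, Finset.mem_coe.2 (mem_rothe_eL u v (Finset.mem_coe.1 hc)),
          by rw [show TofC u v S Tu Tv (eL c) = lsel (slist S) (Tu c) from Tof_eL c]; exact hcx⟩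
      · have hxc : x ∈ Finset.Icc 1 (plen u + plen v) \ S :=
          Finset.mem_sdiff.2 ⟨Finset.mem_Icc.2 hx, hxs⟩
        obtain ⟨c, hc, hcx⟩ := selR.surjOn (Finset.mem_coe.2 hxc)
        exact ⟨eR c, Finset.mem_coe.2 (mem_rothe_eR u v (Finset.mem_coe.1 hc)),
          by rw [show TofC u v S Tu Tv (eR c)
              = lsel (slist (Finset.Icc 1 (plen u + plen v) \ S)) (Tv c) from Tof_eR c]
             exact hcx⟩
  · intro c hc c' hc' h1 h2
    rcases rothe_cases u v hc with ⟨i, j, rfl, hm⟩ | ⟨i, j, rfl, hm⟩ <;>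
    rcases rothe_cases u v hc' with ⟨i', j', rfl, hm'⟩ | ⟨i', j', rfl, hm'⟩
    · rw [evL i j, evL i' j']
      have hii : i = i' := Fin.castAdd_injective _ _ h1
      have hjj : j < j' := h2
      exact sel_mono (hbu u hcard hTu) hm hm' (hTu.2.2.1 _ hm _ hm' hii hjj)
    · exact absurd (congrArg Fin.val h1) (by simp; omega)
    · exact absurd (congrArg Fin.val h1) (by simp; omega)
    · rw [evR i j, evR i' j']
      have hii : i = i' := by
        have := congrArg Fin.val h1; simp at this; exact Fin.ext this
      have hjj : j < j' := by
        have := h2; rw [Fin.lt_def] at this ⊢; simpa using this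
      exact sel_mono (hbv u v hS hcard hTv) hm hm' (hTv.2.2.1 _ hm _ hm' hii hjj)
  · intro c hc c' hc' h1 h2
    rcases rothe_cases u v hc with ⟨i, j, rfl, hm⟩ | ⟨i, j, rfl, hm⟩ <;>
    rcases rothe_cases u v hc' with ⟨i', j', rfl, hm'⟩ | ⟨i', j', rfl, hm'⟩
    · rw [evL i j, evL i' j']
      have hjj : j = j' := Fin.castAdd_injective _ _ h1
      have hii : i < i' := h2
      exact sel_mono (hbu u hcard hTu) hm hm' (hTu.2.2.2 _ hm _ hm' hjj hii)
    · exact absurd (congrArg Fin.val h1) (by simp; omega)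
    · exact absurd (congrArg Fin.val h1) (by simp; omega)
    · rw [evR i j, evR i' j']
      have hjj : j = j' := by
        have := congrArg Fin.val h1; simp at this; exact Fin.ext this
      have hii : i < i' := by
        have := h2; rw [Fin.lt_def] at this ⊢; simpa using this
      exact sel_mono (hbv u v hS hcard hTv) hm hm' (hTv.2.2.2 _ hm _ hm' hjj hii)

lemma Sof_TofC (hcard : S.card = plen u) (hTu : IsSRT u Tu) :
    Sof u (TofC u v S Tu Tv) = S := by
  have : Sof u (TofC u v S Tu Tv) = (rothe u).image (fun c => lsel (slist S) (Tu c)) := by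
    apply Finset.image_congr
    intro c _
    exact Tof_eL c
  rw [this, sel_image (hbu u hcard hTu)]

lemma Svof_TofC (hS : S ⊆ Finset.Icc 1 (plen u + plen v)) (hcard : S.card = plen u)
    (hTv : IsSRT v Tv) :
    Svof v (TofC u v S Tu Tv) = Finset.Icc 1 (plen u + plen v) \ S := by
  have : Svof v (TofC u v S Tu Tv)
      = (rothe v).image (fun c => lsel (slist (Finset.Icc 1 (plen u + plen v) \ S)) (Tv c)) := by
    apply Finset.image_congr
    intro c _
    exact Tof_eR c
  rw [this, sel_image (hbv u v hS hcard hTv)]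

lemma Tuof_TofC (hcard : S.card = plen u) (hTu : IsSRT u Tu) :
    Tuof u (TofC u v S Tu Tv) = Tu := by
  funext c
  by_cases hc : c ∈ rothe u
  · rw [Tuof]
    rw [if_pos hc, Sof_TofC u v hcard hTu]
    rw [show TofC u v S Tu Tv (eL c) = lsel (slist S) (Tu c) from Tof_eL c]
    exact sel_recover (hbu u hcard hTu) hc
  · rw [Tuof, if_neg hc, (hTu.2.1 _ hc).symm]

lemma Tvof_TofC (hS : S ⊆ Finset.Icc 1 (plen u + plen v)) (hcard : S.card = plen u)
    (hTv : IsSRT v Tv) :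
    Tvof v (TofC u v S Tu Tv) = Tv := by
  funext c
  by_cases hc : c ∈ rothe v
  · rw [Tvof]
    rw [if_pos hc, Svof_TofC u v hS hcard hTv]
    rw [show TofC u v S Tu Tv (eR c)
        = lsel (slist (Finset.Icc 1 (plen u + plen v) \ S)) (Tv c) from Tof_eR c]
    exact sel_recover (hbv u v hS hcard hTv) hc
  · rw [Tvof, if_neg hc, (hTv.2.1 _ hc).symm]

end Backward

end Main
end SRTaux

/-- `|SRT(u ⊕ v)| = C(ℓ(u)+ℓ(v), ℓ(u)) · |SRT(u)| · |SRT(v)|`. -/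
theorem srtCard_dsum {k m : ℕ} (u : Equiv.Perm (Fin k)) (v : Equiv.Perm (Fin m)) :
    srtCard (dsum u v)
      = Nat.choose (plen u + plen v) (plen u) * srtCard u * srtCard v := by
  classical
  open SRTaux in
  have key : Nat.card {T : Fin (k+m) × Fin (k+m) → ℕ // IsSRT (dsum u v) T}
      = Nat.card
        ({S // S ∈ Finset.powersetCard (plen u) (Finset.Icc 1 (plen u + plen v))} ×
          {Tu // IsSRT u Tu} × {Tv // IsSRT v Tv}) := by
    apply Nat.card_eq_of_bijective (fun T =>
      (⟨Sof u T.1, Sof_mem_pows u v T.2⟩,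
       ⟨Tuof u T.1, IsSRT_Tuof u v T.2⟩,
       ⟨Tvof v T.1, IsSRT_Tvof u v T.2⟩))
    constructor
    · rintro ⟨T, hT⟩ ⟨T', hT'⟩ h
      simp only [Prod.mk.injEq, Subtype.mk.injEq] at h
      apply Subtype.ext
      funext c
      show T c = T' c
      by_cases hc : c ∈ rothe (dsum u v)
      · rcases rothe_cases u v hc with ⟨i, j, rfl, hm⟩ | ⟨i, j, rfl, hm⟩
        · show T (eL (i, j)) = T' (eL (i, j))
          rw [← recoverL u v hT hm, ← recoverL u v hT' hm, h.1, h.2.1]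
        · show T (eR (i, j)) = T' (eR (i, j))
          rw [← recoverR u v hT hm, ← recoverR u v hT' hm,
            Svof_eq_compl u v hT, Svof_eq_compl u v hT', h.1, h.2.2]
      · rw [hT.2.1 _ hc, hT'.2.1 _ hc]
    · rintro ⟨⟨S, hSmem⟩, ⟨Tu, hTu⟩, ⟨Tv, hTv⟩⟩
      obtain ⟨hS, hcard⟩ := Finset.mem_powersetCard.1 hSmem
      refine ⟨⟨TofC u v S Tu Tv, IsSRT_TofC u v hS hcard hTu hTv⟩, ?_⟩
      simp only [Prod.mk.injEq, Subtype.mk.injEq]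
      exact ⟨Sof_TofC u v hcard hTu, Tuof_TofC u v hcard hTu, Tvof_TofC u v hS hcard hTv⟩
  rw [srtCard, key, Nat.card_prod, Nat.card_prod]
  have h1 : Nat.card {S // S ∈ Finset.powersetCard (plen u) (Finset.Icc 1 (plen u + plen v))}
      = Nat.choose (plen u + plen v) (plen u) := by
    rw [Nat.card_eq_finsetCard, Finset.card_powersetCard, Nat.card_Icc]
    norm_num
  rw [h1, srtCard, srtCard, mul_assoc]
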